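/- Let H₁ be an m₁ × n₁ matrix and H₂ an m₂ × n₂ matrix over 𝔽₂ = ZMod 2. Define the hypergraph-product parity-check matrices as the block matrices H_X = [ H₁ ⊗ I_{n₂} | I_{m₁} ⊗ H₂ᵀ ] (of size m₁n₂ × (n₁n₂ + m₁m₂)) and H_Z = [ I_{n₁} ⊗ H₂ | H₁ᵀ ⊗ I_{m₂} ] (of size n₁m₂ × (n₁n₂ + m₁m₂)), where ⊗ denotes the Kronecker product and the two column blocks are indexed by (Fin n₁ × Fin n₂) and (Fin m₁ × Fin m₂) respectively. Then H_X · H_Zᵀ = 0; that is, the hypergraph product of any two linear codes defines a valid CSS code. -/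

import Mathlib

open Kronecker

/-- The hypergraph product of two classical linear codes is a valid CSS code: for any
parity-check matrices `H₁` (of size `m₁ × n₁`) and `H₂` (of size `m₂ × n₂`) over `𝔽₂`,
the block Kronecker-product matrices `H_X = [H₁ ⊗ I_{n₂} | I_{m₁} ⊗ H₂ᵀ]` and
`H_Z = [I_{n₁} ⊗ H₂ | H₁ᵀ ⊗ I_{m₂}]` satisfy `H_X · H_Zᵀ = 0`. -/
theorem hypergraphProduct_css (m₁ n₁ m₂ n₂ : ℕ)
    (H₁ : Matrix (Fin m₁) (Fin n₁) (ZMod 2)) (H₂ : Matrix (Fin m₂) (Fin n₂) (ZMod 2)) :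
    Matrix.fromCols (H₁ ⊗ₖ (1 : Matrix (Fin n₂) (Fin n₂) (ZMod 2)))
        ((1 : Matrix (Fin m₁) (Fin m₁) (ZMod 2)) ⊗ₖ H₂.transpose)
      * (Matrix.fromCols ((1 : Matrix (Fin n₁) (Fin n₁) (ZMod 2)) ⊗ₖ H₂)
          (H₁.transpose ⊗ₖ (1 : Matrix (Fin m₂) (Fin m₂) (ZMod 2)))).transpose
      = 0 := by
  rw [Matrix.transpose_fromCols, Matrix.fromCols_mul_fromRows,
    ← Matrix.kroneckerMap_transpose, ← Matrix.kroneckerMap_transpose,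
    Matrix.transpose_one, Matrix.transpose_one, Matrix.transpose_transpose,
    ← Matrix.mul_kronecker_mul, ← Matrix.mul_kronecker_mul,
    Matrix.mul_one, Matrix.one_mul, Matrix.mul_one, Matrix.one_mul]
  ext i j
  simp [CharTwo.add_self_eq_zero]
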